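/- arXiv:2507.01748 — 2 statements merged into one kernel-verified Lean document; each statement's English description precedes it below -/
import Mathlib

section
/- The function g is continuously differentiable on ℝ (in particular the one-sided derivatives of the two branches agree at s = (αk)^{−1/2}), and g is strictly decreasing on (0, ∞) and strictly increasing on (−∞, 0). -/
open Real Filter Set

/-- The constant α = (9+3√5)/2. -/
noncomputable def alph : ℝ := (9 + 3 * Real.sqrt 5) / 2

/-- The constant β = 2 α^{3/2} √(α−1). -/
noncomputable def bet : ℝ := 2 * alph ^ ((3 : ℝ) / 2) * Real.sqrt (alph - 1)

/-- The change-of-variable function g (extended evenly to negative arguments):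
g(s) = √(1 − k s²) for |s| < (αk)^{−1/2}, and g(s) = 1/(βk s²) + √3/2 for |s| ≥ (αk)^{−1/2}. -/
noncomputable def g (k s : ℝ) : ℝ :=
  if |s| < 1 / Real.sqrt (alph * k) then Real.sqrt (1 - k * s ^ 2)
  else 1 / (bet * k * s ^ 2) + Real.sqrt 3 / 2

/-- G(t) = ∫₀ᵗ g(s) ds. -/
noncomputable def G (k t : ℝ) : ℝ := ∫ s in (0 : ℝ)..t, g k s



lemma sqrt5_sq : Real.sqrt 5 ^ 2 = 5 := Real.sq_sqrt (by norm_num)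
lemma sqrt5_gt : (2:ℝ) < Real.sqrt 5 := by
  nlinarith [sqrt5_sq, Real.sqrt_nonneg 5]

lemma alph_gt : (15:ℝ)/2 < alph := by unfold alph; nlinarith [sqrt5_gt]
lemma alph_pos : (0:ℝ) < alph := by nlinarith [alph_gt]
lemma alph_gt_one : (1:ℝ) < alph := by nlinarith [alph_gt]
lemma alph_sq : alph ^ 2 = 9 * alph - 9 := by
  unfold alph; nlinarith [sqrt5_sq]

lemma bet_eq : bet = 2 * alph * Real.sqrt alph * Real.sqrt (alph - 1) := by
  unfold bet
  rw [show (3:ℝ)/2 = 1 + 1/2 by norm_num, Real.rpow_add alph_pos, Real.rpow_one,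
    ← Real.sqrt_eq_rpow]
  ring

lemma bet_pos : 0 < bet := by
  rw [bet_eq]
  have h := alph_gt_one
  have h1 : 0 < Real.sqrt alph := Real.sqrt_pos.mpr alph_pos
  have h2 : 0 < Real.sqrt (alph - 1) := Real.sqrt_pos.mpr (by linarith)
  nlinarith [mul_pos (mul_pos alph_pos h1) h2]

lemma key_id : Real.sqrt 3 * Real.sqrt alph * Real.sqrt (alph - 1) = 2 * alph - 3 := by
  rw [← Real.sqrt_mul (by norm_num), ← Real.sqrt_mul (by nlinarith [alph_pos] : (0:ℝ) ≤ 3 * alph),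
    show 3 * alph * (alph - 1) = (2 * alph - 3)^2 by nlinarith [alph_sq],
    Real.sqrt_sq (by nlinarith [alph_gt])]

lemma match_val : Real.sqrt (1 - 1/alph) = alph / bet + Real.sqrt 3 / 2 := by
  have hA : 0 < Real.sqrt alph := Real.sqrt_pos.mpr alph_pos
  have hB : 0 < Real.sqrt (alph - 1) := Real.sqrt_pos.mpr (by nlinarith [alph_gt_one])
  have hA2 : Real.sqrt alph ^ 2 = alph := Real.sq_sqrt alph_pos.le
  have hB2 : Real.sqrt (alph - 1) ^ 2 = alph - 1 := Real.sq_sqrt (by nlinarith [alph_gt_one])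
  have hane : alph ≠ 0 := alph_pos.ne'
  have hAne : Real.sqrt alph ≠ 0 := hA.ne'
  have hBne : Real.sqrt (alph - 1) ≠ 0 := hB.ne'
  have h1 : 1 - 1/alph = (Real.sqrt (alph - 1) / Real.sqrt alph)^2 := by
    rw [div_pow, hA2, hB2]
    field_simp
  rw [h1, Real.sqrt_sq (by positivity), bet_eq]
  have h2 : alph / (2*alph*Real.sqrt alph*Real.sqrt (alph-1)) + Real.sqrt 3 / 2
      = (1 + Real.sqrt 3 * Real.sqrt alph * Real.sqrt (alph-1))
        / (2 * Real.sqrt alph * Real.sqrt (alph-1)) := by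
    field_simp
  rw [h2, key_id, div_eq_div_iff hAne (by positivity)]
  linear_combination (2 * Real.sqrt alph) * hB2

lemma alph_sub_pos : (0:ℝ) < alph - 1 := by nlinarith [alph_gt_one]

lemma sqrt_one_sub : Real.sqrt (1 - 1/alph) = Real.sqrt (alph - 1) / Real.sqrt alph := by
  have hA : 0 < Real.sqrt alph := Real.sqrt_pos.mpr alph_pos
  have hA2 : Real.sqrt alph ^ 2 = alph := Real.sq_sqrt alph_pos.le
  have hB2 : Real.sqrt (alph - 1) ^ 2 = alph - 1 := Real.sq_sqrt alph_sub_pos.le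
  have hane : alph ≠ 0 := alph_pos.ne'
  have h1 : 1 - 1/alph = (Real.sqrt (alph - 1) / Real.sqrt alph)^2 := by
    rw [div_pow, hA2, hB2]
    field_simp
  rw [h1, Real.sqrt_sq (by positivity)]

lemma ks0_sq (k : ℝ) (hk : 0 < k) : k * (1 / Real.sqrt (alph * k))^2 = 1/alph := by
  have h : Real.sqrt (alph * k) ^ 2 = alph * k := Real.sq_sqrt (mul_pos alph_pos hk).le
  have hane : alph ≠ 0 := alph_pos.ne'
  have hkne : k ≠ 0 := hk.ne'
  rw [div_pow, one_pow, h]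
  field_simp

lemma s0_pos (k : ℝ) (hk : 0 < k) : 0 < 1 / Real.sqrt (alph * k) := by
  have : 0 < alph * k := mul_pos alph_pos hk
  positivity

lemma one_sub_pos (k : ℝ) (hk : 0 < k) {s : ℝ} (h : |s| ≤ 1 / Real.sqrt (alph * k)) :
    0 < 1 - k * s^2 := by
  have h1 : k * s^2 ≤ 1/alph := by
    rw [← ks0_sq k hk]
    have : s^2 ≤ (1 / Real.sqrt (alph * k))^2 := by
      rw [← sq_abs]
      exact pow_le_pow_left₀ (abs_nonneg s) h 2
    nlinarith [hk]
  have h2 : (1:ℝ)/alph < 1 := by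
    rw [div_lt_one alph_pos]; exact alph_gt_one
  linarith

lemma match_deriv (k : ℝ) (hk : 0 < k) :
    -(k * (1 / Real.sqrt (alph * k))) / Real.sqrt (1 - k * (1 / Real.sqrt (alph * k))^2)
      = -2 / (bet * k * (1 / Real.sqrt (alph * k))^3) := by
  have hsplit : Real.sqrt (alph * k) = Real.sqrt alph * Real.sqrt k :=
    Real.sqrt_mul alph_pos.le k
  rw [ks0_sq k hk, sqrt_one_sub, hsplit, bet_eq]
  set A := Real.sqrt alph with hAdef
  set B := Real.sqrt (alph - 1) with hBdef
  set K := Real.sqrt k with hKdef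
  have hA : 0 < A := Real.sqrt_pos.mpr alph_pos
  have hB : 0 < B := Real.sqrt_pos.mpr alph_sub_pos
  have hK : 0 < K := Real.sqrt_pos.mpr hk
  have hA2 : A ^ 2 = alph := Real.sq_sqrt alph_pos.le
  have hK2 : K ^ 2 = k := Real.sq_sqrt hk.le
  rw [← hA2, ← hK2]
  field_simp

noncomputable def gd (k s : ℝ) : ℝ :=
  if |s| < 1 / Real.sqrt (alph * k) then -(k * s) / Real.sqrt (1 - k * s ^ 2)
  else -2 / (bet * k * s ^ 3)

lemma g_even (k s : ℝ) : g k (-s) = g k s := by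
  simp [g, abs_neg, neg_sq]

lemma gd_odd (k s : ℝ) : gd k (-s) = -(gd k s) := by
  unfold gd
  rw [abs_neg]
  split_ifs with h
  · rw [neg_sq]; ring
  · ring

lemma g_boundary (k : ℝ) (hk : 0 < k) :
    1 / (bet * k * (1 / Real.sqrt (alph * k)) ^ 2) + Real.sqrt 3 / 2
      = Real.sqrt (1 - k * (1 / Real.sqrt (alph * k)) ^ 2) := by
  have h := ks0_sq k hk
  rw [show bet * k * (1 / Real.sqrt (alph * k)) ^ 2
        = bet * (k * (1 / Real.sqrt (alph * k)) ^ 2) from by ring, h,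
    mul_one_div, one_div_div, match_val]

lemma inner_hasDeriv (k : ℝ) {s : ℝ} (h : 0 < 1 - k * s ^ 2) :
    HasDerivAt (fun s : ℝ => Real.sqrt (1 - k * s ^ 2))
      (-(k * s) / Real.sqrt (1 - k * s ^ 2)) s := by
  have h1 : HasDerivAt (fun s : ℝ => 1 - k * s ^ 2) (-(2 * k * s)) s := by
    have := ((hasDerivAt_pow 2 s).const_mul k).const_sub 1
    refine this.congr_deriv ?_
    simp; ring
  have h2 := h1.sqrt h.ne'
  convert h2 using 1
  have hne : Real.sqrt (1 - k * s ^ 2) ≠ 0 := (Real.sqrt_pos.mpr h).ne'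
  field_simp

lemma outer_hasDeriv (k : ℝ) (hk : 0 < k) {s : ℝ} (h : s ≠ 0) :
    HasDerivAt (fun s : ℝ => 1 / (bet * k * s ^ 2) + Real.sqrt 3 / 2)
      (-2 / (bet * k * s ^ 3)) s := by
  have hb : bet * k ≠ 0 := (mul_pos bet_pos hk).ne'
  have h1 : HasDerivAt (fun s : ℝ => bet * k * s ^ 2) (bet * k * (2 * s)) s := by
    have := (hasDerivAt_pow 2 s).const_mul (bet * k)
    refine this.congr_deriv ?_
    simp
  have hne : bet * k * s ^ 2 ≠ 0 := mul_ne_zero hb (pow_ne_zero _ h)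
  have h2 := (h1.inv hne).add_const (Real.sqrt 3 / 2)
  have heq : (fun s : ℝ => (bet * k * s ^ 2)⁻¹ + Real.sqrt 3 / 2)
      = fun s : ℝ => 1 / (bet * k * s ^ 2) + Real.sqrt 3 / 2 := by
    funext t; rw [one_div]
  simp only [Pi.inv_apply] at h2
  rw [heq] at h2
  refine h2.congr_deriv ?_
  field_simp

lemma junction_aux (k : ℝ) (hk : 0 < k) (s : ℝ) (hs0def : s = 1 / Real.sqrt (alph * k)) :
    HasDerivAt (g k) (-2 / (bet * k * s ^ 3)) s := by
  have hs0 : 0 < s := hs0def ▸ s0_pos k hk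
  have habs : |s| = s := abs_of_nonneg hs0.le
  have hnlt : ¬ |s| < s := by rw [habs]; exact lt_irrefl s
  have hnlt' : ¬ |s| < 1 / Real.sqrt (alph * k) := by rw [← hs0def]; exact hnlt
  have hpos : 0 < 1 - k * s ^ 2 :=
    one_sub_pos k hk (le_of_eq (by rw [habs, hs0def]))
  have hval : g k s = Real.sqrt (1 - k * s ^ 2) := by
    unfold g
    rw [if_neg hnlt', hs0def]
    exact g_boundary k hk
  have hInner : HasDerivAt (fun t : ℝ => Real.sqrt (1 - k * t ^ 2))
      (-2 / (bet * k * s ^ 3)) s := by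
    have h1 := inner_hasDeriv k hpos
    rw [hs0def] at h1
    rw [match_deriv k hk] at h1
    rwa [← hs0def] at h1
  have hOuter := outer_hasDeriv k hk hs0.ne'
  have hL : HasDerivWithinAt (g k) (-2 / (bet * k * s ^ 3)) (Iic s) s := by
    refine hInner.hasDerivWithinAt.congr_of_eventuallyEq ?_ hval
    filter_upwards [mem_nhdsWithin_of_mem_nhds (t := Iic s) (Ioi_mem_nhds hs0),
      self_mem_nhdsWithin] with t ht hts
    rcases eq_or_lt_of_le (mem_Iic.mp hts) with h1 | h1
    · rw [h1]; exact hval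
    · exact if_pos (by rw [← hs0def, abs_of_pos ht]; exact h1)
  have hR : HasDerivWithinAt (g k) (-2 / (bet * k * s ^ 3)) (Ici s) s := by
    apply hOuter.hasDerivWithinAt.congr_of_eventuallyEq
    · filter_upwards [self_mem_nhdsWithin] with t hts
      exact if_neg (by rw [← hs0def]; exact not_lt.mpr ((mem_Ici.mp hts).trans (le_abs_self t)))
    · exact if_neg hnlt'
  have hU := hL.union hR
  rw [Iic_union_Ici] at hU
  exact hasDerivWithinAt_univ.mp hU

lemma g_hasDeriv (k : ℝ) (hk : 0 < k) : ∀ s : ℝ, HasDerivAt (g k) (gd k s) s := by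
  have hs0 : 0 < 1 / Real.sqrt (alph * k) := s0_pos k hk
  have main : ∀ s : ℝ, 0 ≤ s → HasDerivAt (g k) (gd k s) s := by
    intro s hs
    rcases lt_trichotomy s (1 / Real.sqrt (alph * k)) with hlt | heq | hgt
    · have habs : |s| < 1 / Real.sqrt (alph * k) := by rwa [abs_of_nonneg hs]
      have hpos := one_sub_pos k hk habs.le
      have hg : gd k s = -(k * s) / Real.sqrt (1 - k * s ^ 2) := if_pos habs
      rw [hg]
      apply (inner_hasDeriv k hpos).congr_of_eventuallyEq
      have hopen : IsOpen {t : ℝ | |t| < 1 / Real.sqrt (alph * k)} :=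
        isOpen_lt continuous_abs continuous_const
      filter_upwards [hopen.mem_nhds habs] with t ht
      exact if_pos ht
    · have hnlt : ¬ |s| < 1 / Real.sqrt (alph * k) := by
        rw [abs_of_nonneg hs, heq]
        exact lt_irrefl _
      have hg : gd k s = -2 / (bet * k * s ^ 3) := if_neg hnlt
      rw [hg]
      exact junction_aux k hk s heq
    · have habs : 1 / Real.sqrt (alph * k) < |s| := by rw [abs_of_nonneg hs]; exact hgt
      have hg : gd k s = -2 / (bet * k * s ^ 3) := if_neg (not_lt.mpr habs.le)
      rw [hg]
      apply (outer_hasDeriv k hk (hs0.trans hgt).ne').congr_of_eventuallyEq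
      have hopen : IsOpen {t : ℝ | 1 / Real.sqrt (alph * k) < |t|} :=
        isOpen_lt continuous_const continuous_abs
      filter_upwards [hopen.mem_nhds habs] with t ht
      exact if_neg (not_lt.mpr ht.le)
  intro s
  rcases le_or_gt 0 s with hs | hs
  · exact main s hs
  · have h2 := (main (-s) (by linarith)).comp s (hasDerivAt_neg' (x := s))
    have e1 : (g k ∘ fun t : ℝ => -t) = g k := funext fun t => g_even k t
    have e2 : gd k (-s) * (-1) = gd k s := by rw [gd_odd]; ring
    rw [e1, e2] at h2
    exact h2

lemma inner'_contAt (k : ℝ) {s : ℝ} (h : 0 < 1 - k * s ^ 2) :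
    ContinuousAt (fun t : ℝ => -(k * t) / Real.sqrt (1 - k * t ^ 2)) s := by
  apply ContinuousAt.div
  · fun_prop
  · exact (Real.continuous_sqrt.comp (by continuity)).continuousAt
  · exact (Real.sqrt_pos.mpr h).ne'

lemma outer'_contAt (k : ℝ) (hk : 0 < k) {s : ℝ} (h : s ≠ 0) :
    ContinuousAt (fun t : ℝ => -2 / (bet * k * t ^ 3)) s := by
  apply ContinuousAt.div
  · fun_prop
  · fun_prop
  · exact mul_ne_zero (mul_pos bet_pos hk).ne' (pow_ne_zero _ h)

lemma gd_cont (k : ℝ) (hk : 0 < k) : Continuous (gd k) := by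
  rw [continuous_iff_continuousAt]
  have hs0 : 0 < 1 / Real.sqrt (alph * k) := s0_pos k hk
  have main : ∀ s : ℝ, 0 ≤ s → ContinuousAt (gd k) s := by
    intro s hs
    rcases lt_trichotomy s (1 / Real.sqrt (alph * k)) with hlt | heq | hgt
    · have habs : |s| < 1 / Real.sqrt (alph * k) := by rwa [abs_of_nonneg hs]
      apply (inner'_contAt k (one_sub_pos k hk habs.le)).congr
      have hopen : IsOpen {t : ℝ | |t| < 1 / Real.sqrt (alph * k)} :=
        isOpen_lt continuous_abs continuous_const
      filter_upwards [hopen.mem_nhds habs] with t ht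
      exact (if_pos ht).symm
    · -- junction
      have hspos : 0 < s := heq ▸ hs0
      have habs : |s| = s := abs_of_nonneg hs
      have hnlt : ¬ |s| < 1 / Real.sqrt (alph * k) := by
        rw [habs, heq]; exact lt_irrefl _
      have hpos : 0 < 1 - k * s ^ 2 := one_sub_pos k hk (le_of_eq (by rw [habs, heq]))
      have hgval : gd k s = -(k * s) / Real.sqrt (1 - k * s ^ 2) := by
        unfold gd
        rw [if_neg hnlt, heq, ← match_deriv k hk]
      have hL : ContinuousWithinAt (gd k) (Iic s) s := by
        refine ((inner'_contAt k hpos).continuousWithinAt).congr_of_eventuallyEq ?_ hgval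
        filter_upwards [mem_nhdsWithin_of_mem_nhds (t := Iic s) (Ioi_mem_nhds hspos),
          self_mem_nhdsWithin] with t ht hts
        rcases eq_or_lt_of_le (mem_Iic.mp hts) with h1 | h1
        · rw [h1]; exact hgval
        · exact if_pos (by rw [abs_of_pos ht, ← heq] at *; exact h1)
      have hR : ContinuousWithinAt (gd k) (Ici s) s := by
        refine ((outer'_contAt k hk hspos.ne').continuousWithinAt).congr_of_eventuallyEq
          ?_ (if_neg hnlt)
        filter_upwards [self_mem_nhdsWithin] with t hts
        exact if_neg (by rw [← heq]; exact not_lt.mpr ((mem_Ici.mp hts).trans (le_abs_self t)))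
      have hU := hL.union hR
      rw [Iic_union_Ici] at hU
      exact (continuousWithinAt_univ _ _).mp hU
    · have habs : 1 / Real.sqrt (alph * k) < |s| := by rw [abs_of_nonneg hs]; exact hgt
      apply (outer'_contAt k hk (hs0.trans hgt).ne').congr
      have hopen : IsOpen {t : ℝ | 1 / Real.sqrt (alph * k) < |t|} :=
        isOpen_lt continuous_const continuous_abs
      filter_upwards [hopen.mem_nhds habs] with t ht
      exact (if_neg (not_lt.mpr ht.le)).symm
  intro s
  rcases le_or_gt 0 s with hs | hs
  · exact main s hs
  · have h := ((main (-s) (by linarith)).comp (continuous_neg.continuousAt)).neg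
    have e : (fun t : ℝ => -(gd k (-t))) = gd k := funext fun t => by rw [gd_odd]; ring
    rw [← e]
    exact h

lemma gd_neg (k : ℝ) (hk : 0 < k) {s : ℝ} (hs : 0 < s) : gd k s < 0 := by
  unfold gd
  split_ifs with h
  · exact div_neg_of_neg_of_pos (by nlinarith)
      (Real.sqrt_pos.mpr (one_sub_pos k hk h.le))
  · apply div_neg_of_neg_of_pos (by norm_num)
    have h3 : 0 < s ^ 3 := by positivity
    have := bet_pos
    positivity

lemma gd_pos (k : ℝ) (hk : 0 < k) {s : ℝ} (hs : s < 0) : 0 < gd k s := by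
  have h := gd_neg k hk (s := -s) (by linarith)
  have h2 : gd k (-(-s)) = -(gd k (-s)) := gd_odd k (-s)
  rw [neg_neg] at h2
  rw [h2]
  linarith

/-- g is continuously differentiable on ℝ (in particular the derivatives of the two
branches match at s = (αk)^{−1/2}), strictly decreasing on (0, ∞) and strictly
increasing on (−∞, 0). -/
theorem stmt2 (k : ℝ) (hk : 0 < k) :
    ContDiff ℝ 1 (g k) ∧
    (HasDerivAt (fun s : ℝ => Real.sqrt (1 - k * s ^ 2))
        (deriv (g k) (1 / Real.sqrt (alph * k))) (1 / Real.sqrt (alph * k)) ∧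
      HasDerivAt (fun s : ℝ => 1 / (bet * k * s ^ 2) + Real.sqrt 3 / 2)
        (deriv (g k) (1 / Real.sqrt (alph * k))) (1 / Real.sqrt (alph * k))) ∧
    StrictAntiOn (g k) (Set.Ioi 0) ∧
    StrictMonoOn (g k) (Set.Iio 0) := by
  have hs0 : 0 < 1 / Real.sqrt (alph * k) := s0_pos k hk
  have hD := g_hasDeriv k hk
  have hdiff : Differentiable ℝ (g k) := fun s => (hD s).differentiableAt
  have hderiv : deriv (g k) = gd k := funext fun s => (hD s).deriv
  have hcd : ContDiff ℝ 1 (g k) := by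
    rw [contDiff_one_iff_deriv]
    exact ⟨hdiff, hderiv ▸ gd_cont k hk⟩
  refine ⟨hcd, ⟨?_, ?_⟩, ?_, ?_⟩
  · rw [hderiv]
    have hnlt : ¬ |1 / Real.sqrt (alph * k)| < 1 / Real.sqrt (alph * k) := by
      rw [abs_of_pos hs0]; exact lt_irrefl _
    have hg : gd k (1 / Real.sqrt (alph * k))
        = -2 / (bet * k * (1 / Real.sqrt (alph * k)) ^ 3) := if_neg hnlt
    rw [hg, ← match_deriv k hk]
    exact inner_hasDeriv k (one_sub_pos k hk (le_of_eq (abs_of_pos hs0)))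
  · rw [hderiv]
    have hnlt : ¬ |1 / Real.sqrt (alph * k)| < 1 / Real.sqrt (alph * k) := by
      rw [abs_of_pos hs0]; exact lt_irrefl _
    have hg : gd k (1 / Real.sqrt (alph * k))
        = -2 / (bet * k * (1 / Real.sqrt (alph * k)) ^ 3) := if_neg hnlt
    rw [hg]
    exact outer_hasDeriv k hk hs0.ne'
  · apply strictAntiOn_of_deriv_neg (convex_Ioi 0) (hdiff.continuous.continuousOn)
    intro x hx
    rw [interior_Ioi] at hx
    rw [hderiv]
    exact gd_neg k hk hx
  · apply strictMonoOn_of_deriv_pos (convex_Iio 0) (hdiff.continuous.continuousOn)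
    intro x hx
    rw [interior_Iio] at hx
    rw [hderiv]
    exact gd_pos k hk hx
end

section
/- For every ε > 0 there exists a constant C_ε > 0 such that |F(G⁻¹(v))| ≤ ε v² + C_ε |v|^p for all v ∈ ℝ, where F(t) = ∫₀^t f(s) ds. -/
open Real Filter Set

lemma alph_ge : (4:ℝ) ≤ alph := by
  have := Real.sqrt_nonneg 5
  unfold alph; linarith

lemma bet_ge : alph ≤ bet := by
  have h4 : (4:ℝ) ≤ alph := alph_ge
  have h1 : alph ≤ alph ^ ((3:ℝ)/2) := by
    calc alph = alph ^ (1:ℝ) := (Real.rpow_one _).symm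
    _ ≤ alph ^ ((3:ℝ)/2) := Real.rpow_le_rpow_of_exponent_le (by linarith) (by norm_num)
  have h2 : (1:ℝ) ≤ Real.sqrt (alph - 1) :=
    Real.le_sqrt_of_sq_le (by nlinarith)
  have hp : (0:ℝ) ≤ alph ^ ((3:ℝ)/2) := Real.rpow_nonneg (by linarith) _
  unfold bet
  nlinarith

lemma ks_lt (k : ℝ) (hk : 0 < k) (s : ℝ) (h : |s| < 1 / Real.sqrt (alph * k)) :
    k * s ^ 2 < 1 / alph := by
  have h4 : (4:ℝ) ≤ alph := alph_ge
  have hak : 0 < alph * k := by positivity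
  have hsq : s ^ 2 < (1 / Real.sqrt (alph * k)) ^ 2 := by
    rw [← sq_abs]
    exact pow_lt_pow_left₀ h (abs_nonneg s) (by norm_num)
  rw [div_pow, one_pow, Real.sq_sqrt hak.le] at hsq
  have : k * s ^ 2 < k * (1 / (alph * k)) := by
    exact mul_lt_mul_of_pos_left hsq hk
  calc k * s ^ 2 < k * (1 / (alph * k)) := this
    _ = 1 / alph := by field_simp

lemma g_lower (k : ℝ) (hk : 0 < k) (s : ℝ) : Real.sqrt 3 / 2 ≤ g k s := by
  unfold g
  have h4 : (4:ℝ) ≤ alph := alph_ge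
  split_ifs with h
  · apply Real.le_sqrt_of_sq_le
    have hks := ks_lt k hk s h
    have : 1 / alph ≤ 1 / 4 := by
      apply one_div_le_one_div_of_le <;> linarith
    have h3 : (Real.sqrt 3 / 2) ^ 2 = 3 / 4 := by
      rw [div_pow, Real.sq_sqrt] <;> norm_num
    linarith
  · have hb : 0 < bet := lt_of_lt_of_le (by linarith) bet_ge
    have : 0 ≤ 1 / (bet * k * s ^ 2) := by positivity
    linarith

lemma g_upper (k : ℝ) (hk : 0 < k) (s : ℝ) : g k s ≤ 2 := by
  unfold g
  have h4 : (4:ℝ) ≤ alph := alph_ge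
  have hb : alph ≤ bet := bet_ge
  split_ifs with h
  · have h1 : Real.sqrt (1 - k * s ^ 2) ≤ Real.sqrt 1 :=
      Real.sqrt_le_sqrt (by nlinarith [sq_nonneg s])
    rw [Real.sqrt_one] at h1
    linarith
  · push_neg at h
    have hak : 0 < alph * k := by positivity
    have hs2 : 1 / (alph * k) ≤ s ^ 2 := by
      have h5 : (1 / Real.sqrt (alph*k))^2 ≤ |s| ^ 2 := pow_le_pow_left₀ (by positivity) h 2
      rw [sq_abs, div_pow, one_pow, Real.sq_sqrt hak.le] at h5
      exact h5
    have h1 : 1 ≤ bet * k * s ^ 2 := by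
      calc (1:ℝ) ≤ bet / alph := by rw [le_div_iff₀ (by linarith)]; linarith
        _ = bet * k * (1 / (alph * k)) := by field_simp
        _ ≤ bet * k * s ^ 2 := by
            exact mul_le_mul_of_nonneg_left hs2 (by nlinarith)
    have h2 : 1 / (bet * k * s ^ 2) ≤ 1 := by
      rw [div_le_one (by linarith)]; linarith
    have h3 : Real.sqrt 3 ≤ 2 := by
      rw [show (2:ℝ) = Real.sqrt 4 by rw [show (4:ℝ) = 2^2 by norm_num, Real.sqrt_sq]; norm_num]
      exact Real.sqrt_le_sqrt (by norm_num)
    linarith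

lemma g_integrable (k : ℝ) (hk : 0 < k) (a b : ℝ) :
    IntervalIntegrable (g k) MeasureTheory.volume a b := by
  have hm : Measurable (g k) := by
    unfold g
    apply Measurable.ite
    · exact measurableSet_lt (measurable_id.abs) measurable_const
    · exact (measurable_const.sub (measurable_const.mul (measurable_id.pow measurable_const))).sqrt
    · exact (measurable_const.div ((measurable_const.mul (measurable_id.pow measurable_const)))).add measurable_const
  apply IntervalIntegrable.mono_fun' (g := fun _ => (2:ℝ)) (intervalIntegrable_const)
  · exact hm.aestronglyMeasurable
  · apply Filter.Eventually.of_forall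
    intro x
    have h1 := g_lower k hk x
    have h2 := g_upper k hk x
    have h3 : 0 ≤ Real.sqrt 3 / 2 := by positivity
    simp only [Real.norm_eq_abs]
    rw [abs_of_nonneg (by linarith)]
    exact h2

lemma G_lower (k : ℝ) (hk : 0 < k) (t : ℝ) : Real.sqrt 3 / 2 * |t| ≤ |G k t| := by
  have hInt : ∀ a b : ℝ, IntervalIntegrable (g k) MeasureTheory.volume a b := g_integrable k hk
  have hc : (0:ℝ) < Real.sqrt 3 / 2 := by positivity
  rcases le_or_gt 0 t with ht | ht
  · have h1 := intervalIntegral.integral_mono_on ht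
      (intervalIntegrable_const (c := Real.sqrt 3/2)) (hInt 0 t) (fun x _ => g_lower k hk x)
    rw [intervalIntegral.integral_const, smul_eq_mul] at h1
    have hG : Real.sqrt 3 / 2 * t ≤ G k t := by rw [G]; nlinarith
    have hG0 : 0 ≤ G k t := le_trans (by nlinarith) hG
    rw [abs_of_nonneg ht, abs_of_nonneg hG0]
    exact hG
  · have h1 := intervalIntegral.integral_mono_on ht.le
      (intervalIntegrable_const (c := Real.sqrt 3/2)) (hInt t 0) (fun x _ => g_lower k hk x)
    rw [intervalIntegral.integral_const, smul_eq_mul] at h1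
    have hsym : G k t = -∫ s in t..(0:ℝ), g k s := by
      rw [G, intervalIntegral.integral_symm]
    have hG : G k t ≤ Real.sqrt 3 / 2 * t := by rw [hsym]; nlinarith
    have hG0 : G k t ≤ 0 := le_trans hG (by nlinarith)
    rw [abs_of_nonpos ht.le, abs_of_nonpos hG0]
    linarith


/-- F(t) = ∫₀ᵗ f(s) ds. -/
noncomputable def Fint (f : ℝ → ℝ) (t : ℝ) : ℝ := ∫ s in (0 : ℝ)..t, f s

lemma f_zero (f : ℝ → ℝ) (hf : Continuous f)
    (hf1 : Filter.Tendsto (fun s : ℝ => f s / s) (nhdsWithin 0 {(0 : ℝ)}ᶜ) (nhds 0)) :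
    f 0 = 0 := by
  have h1 : Tendsto f (nhdsWithin 0 {(0:ℝ)}ᶜ) (nhds (f 0)) :=
    (hf.continuousAt).continuousWithinAt
  have h2 : Tendsto f (nhdsWithin 0 {(0:ℝ)}ᶜ) (nhds 0) := by
    have hmul : Tendsto (fun s : ℝ => (f s / s) * s) (nhdsWithin 0 {(0:ℝ)}ᶜ) (nhds (0 * 0)) :=
      hf1.mul (tendsto_id.mono_left nhdsWithin_le_nhds)
    rw [mul_zero] at hmul
    apply hmul.congr'
    filter_upwards [self_mem_nhdsWithin] with s hs
    exact div_mul_cancel₀ (f s) hs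
  exact tendsto_nhds_unique h1 h2

lemma f_bound (p : ℝ) (hp1 : 2 < p) (f : ℝ → ℝ) (hf : Continuous f)
    (hf1 : Filter.Tendsto (fun s : ℝ => f s / s) (nhdsWithin 0 {(0 : ℝ)}ᶜ) (nhds 0))
    (hf2 : Filter.Tendsto (fun s : ℝ => |f s| / |s| ^ (p - 1)) (Filter.cocompact ℝ) (nhds 0))
    (ε : ℝ) (hε : 0 < ε) :
    ∃ C : ℝ, 0 < C ∧ ∀ s : ℝ, |f s| ≤ ε * |s| + C * |s| ^ (p - 1) := by
  have hf0 := f_zero f hf hf1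
  -- small-s bound
  obtain ⟨δ, hδ, hδb⟩ := Metric.tendsto_nhdsWithin_nhds.mp hf1 ε hε
  -- large-s bound
  have h2 : ∀ᶠ s in Filter.cocompact ℝ, |f s| / |s| ^ (p - 1) < 1 :=
    hf2.eventually_lt_const one_pos
  rw [cocompact_eq_atBot_atTop, Filter.eventually_sup, Filter.eventually_atBot,
    Filter.eventually_atTop] at h2
  obtain ⟨⟨R₂, hR₂⟩, ⟨R₁, hR₁⟩⟩ := h2
  set R : ℝ := max (max R₁ (-R₂)) δ with hRdef
  have hRδ : δ ≤ R := le_max_right _ _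
  -- bound on compact part
  obtain ⟨M₀, hM₀⟩ := (isCompact_Icc (a := -R) (b := R)).exists_bound_of_continuousOn
    hf.continuousOn
  set M : ℝ := max M₀ 0 with hMdef
  have hM : ∀ x ∈ Icc (-R) R, |f x| ≤ M := fun x hx =>
    le_trans (hM₀ x hx) (le_max_left _ _)
  have hδp : (0:ℝ) < δ ^ (p - 1) := Real.rpow_pos_of_pos hδ _
  refine ⟨max 1 (M / δ ^ (p-1)), lt_of_lt_of_le one_pos (le_max_left _ _), fun s => ?_⟩
  set C : ℝ := max 1 (M / δ ^ (p-1))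
  have hC1 : (1:ℝ) ≤ C := le_max_left _ _
  have hsp : (0:ℝ) ≤ |s| ^ (p - 1) := Real.rpow_nonneg (abs_nonneg s) _
  rcases lt_or_ge |s| δ with hs | hs
  · -- small
    have hεs : |f s| ≤ ε * |s| := by
      rcases eq_or_ne s 0 with rfl | hs0
      · simp [hf0]
      · have := hδb (by simpa using hs0) (by simpa [Real.dist_eq] using hs)
        rw [Real.dist_eq, sub_zero, abs_div] at this
        have habs : 0 < |s| := abs_pos.2 hs0
        calc |f s| = |f s| / |s| * |s| := by field_simp
          _ ≤ ε * |s| := mul_le_mul_of_nonneg_right this.le (abs_nonneg s)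
    nlinarith
  · rcases le_or_gt |s| R with hsR | hsR
    · -- middle
      have hfs : |f s| ≤ M := hM s (abs_le.mp hsR |> fun h => ⟨h.1, h.2⟩)
      have hle : δ ^ (p-1) ≤ |s| ^ (p-1) :=
        Real.rpow_le_rpow hδ.le hs (by linarith)
      have : M = M / δ ^ (p-1) * δ ^ (p-1) := by field_simp
      have hM0 : 0 ≤ M := le_max_right _ _
      have h5 : M ≤ C * |s| ^ (p-1) := by
        calc M = M / δ ^ (p-1) * δ ^ (p-1) := this
          _ ≤ C * |s| ^ (p-1) := by
            apply mul_le_mul (le_max_right _ _) hle hδp.le (by linarith)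
      nlinarith [abs_nonneg s, mul_nonneg hε.le (abs_nonneg s)]
    · -- large
      have hsp0 : (0:ℝ) < |s| ^ (p - 1) := Real.rpow_pos_of_pos (by linarith [abs_nonneg s]; ) _
      have hbig : |f s| / |s| ^ (p-1) < 1 := by
        rcases le_or_gt 0 s with hs0 | hs0
        · have : R₁ ≤ s := by
            have : R₁ ≤ R := le_trans (le_max_left _ _) (le_max_left _ _)
            rw [abs_of_nonneg hs0] at hsR; linarith
          exact hR₁ s this
        · have : s ≤ R₂ := by
            have h6 : -R₂ ≤ R := le_trans (le_max_right _ _) (le_max_left _ _)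
            rw [abs_of_neg hs0] at hsR; linarith
          exact hR₂ s this
      have : |f s| ≤ |s| ^ (p-1) := by
        rw [div_lt_one hsp0] at hbig; linarith
      nlinarith [mul_nonneg hε.le (abs_nonneg s)]

lemma F_bound (p : ℝ) (hp1 : 2 < p) (f : ℝ → ℝ) (hf : Continuous f)
    (hf1 : Filter.Tendsto (fun s : ℝ => f s / s) (nhdsWithin 0 {(0 : ℝ)}ᶜ) (nhds 0))
    (hf2 : Filter.Tendsto (fun s : ℝ => |f s| / |s| ^ (p - 1)) (Filter.cocompact ℝ) (nhds 0))
    (ε : ℝ) (hε : 0 < ε) :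
    ∃ C : ℝ, 0 < C ∧ ∀ t : ℝ, |Fint f t| ≤ ε * t ^ 2 + C * |t| ^ p := by
  obtain ⟨C, hC, hfb⟩ := f_bound p hp1 f hf hf1 hf2 ε hε
  refine ⟨C, hC, fun t => ?_⟩
  rcases eq_or_ne t 0 with rfl | ht0
  · simp [Fint, Real.zero_rpow (by positivity : p ≠ 0)]
  have habs : 0 < |t| := abs_pos.2 ht0
  have hkey : |Fint f t| ≤ (ε * |t| + C * |t| ^ (p-1)) * |t - 0| := by
    rw [show |Fint f t| = ‖∫ s in (0:ℝ)..t, f s‖ by rw [Fint, Real.norm_eq_abs]]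
    apply intervalIntegral.norm_integral_le_of_norm_le_const
    intro x hx
    have hxt : |x| ≤ |t| := by
      rw [Set.mem_uIoc] at hx
      rcases hx with ⟨h1, h2⟩ | ⟨h1, h2⟩ <;> rw [abs_le] <;>
        constructor <;> linarith [le_abs_self t, neg_abs_le t]
    rw [Real.norm_eq_abs]
    calc |f x| ≤ ε * |x| + C * |x| ^ (p-1) := hfb x
      _ ≤ ε * |t| + C * |t| ^ (p-1) := by
        have := Real.rpow_le_rpow (abs_nonneg x) hxt (by linarith : (0:ℝ) ≤ p - 1)
        nlinarith
  rw [sub_zero] at hkey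
  have hexp : |t| ^ (p-1) * |t| = |t| ^ p := by
    rw [← Real.rpow_add_one (by positivity) (p-1)]
    ring_nf
  calc |Fint f t| ≤ (ε * |t| + C * |t| ^ (p-1)) * |t| := hkey
    _ = ε * (|t| * |t|) + C * (|t| ^ (p-1) * |t|) := by ring
    _ = ε * t ^ 2 + C * |t| ^ p := by rw [hexp, ← abs_mul, ← sq, abs_of_nonneg (sq_nonneg t)]


/-- Under (f1), (f2): for every ε > 0 there is C_ε > 0 with
|F(G⁻¹(v))| ≤ ε v² + C_ε|v|^p for all v ∈ ℝ. -/
theorem stmt15 (N : ℕ) (hN : 3 ≤ N) (p : ℝ)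
    (hp1 : 2 < p) (hp2 : p < 2 * (N : ℝ) / ((N : ℝ) - 2))
    (f : ℝ → ℝ) (hf : Continuous f)
    (hf1 : Filter.Tendsto (fun s : ℝ => f s / s) (nhdsWithin 0 {(0 : ℝ)}ᶜ) (nhds 0))
    (hf2 : Filter.Tendsto (fun s : ℝ => |f s| / |s| ^ (p - 1))
      (Filter.cocompact ℝ) (nhds 0))
    (k : ℝ) (hk : 0 < k) (Ginv : ℝ → ℝ)
    (hL : Function.LeftInverse Ginv (G k)) (hR : Function.RightInverse Ginv (G k)) :
    ∀ ε : ℝ, 0 < ε → ∃ C : ℝ, 0 < C ∧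
      ∀ v : ℝ, |Fint f (Ginv v)| ≤ ε * v ^ 2 + C * |v| ^ p := by
  intro ε hε
  obtain ⟨C', hC', hFb⟩ := F_bound p hp1 f hf hf1 hf2 (ε/4) (by positivity)
  have h2p : (0:ℝ) < 2 ^ p := Real.rpow_pos_of_pos two_pos p
  refine ⟨C' * 2 ^ p, by positivity, fun v => ?_⟩
  set t := Ginv v with htdef
  have hGt : G k t = v := hR v
  have hlow := G_lower k hk t
  rw [hGt] at hlow
  have h3 : (1:ℝ) ≤ Real.sqrt 3 := Real.le_sqrt_of_sq_le (by norm_num)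
  have ht : |t| ≤ 2 * |v| := by nlinarith [abs_nonneg t]
  have h1 : t ^ 2 ≤ 4 * v ^ 2 := by
    nlinarith [sq_abs t, sq_abs v, abs_nonneg t, abs_nonneg v]
  have h2 : |t| ^ p ≤ 2 ^ p * |v| ^ p := by
    calc |t| ^ p ≤ (2 * |v|) ^ p := Real.rpow_le_rpow (abs_nonneg t) ht (by linarith)
      _ = 2 ^ p * |v| ^ p := Real.mul_rpow (by norm_num) (abs_nonneg v)
  calc |Fint f t| ≤ ε/4 * t ^ 2 + C' * |t| ^ p := hFb t
    _ ≤ ε * v ^ 2 + C' * 2 ^ p * |v| ^ p := by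
        nlinarith [mul_le_mul_of_nonneg_left h2 hC'.le]
end
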